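/- Let T : ℓ¹ → ℓ¹ be a continuous linear operator such that the sequence z = (T(e_n)) converges to zero uniformly on ℕ (i.e., ‖T e_n‖_∞ = sup_k |(T e_n)(k)| → 0 as n → ∞), where (e_n) is the standard unit vector basis of ℓ¹. Then for every bounded sequence x = (x_n) in ℓ¹ converging to zero pointwise on ℕ, the sequence (T(x_n)) is bounded and converges to zero uniformly on ℕ, i.e., ‖T x_n‖_∞ → 0. -/

import Mathlib

open Filter Set

noncomputable abbrev L1 := lp (fun _ : ℕ => ℝ) 1

lemma hasSum_abs' (u : L1) : HasSum (fun j => |u j|) ‖u‖ := by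
  have h := lp.hasSum_norm (p := 1) (by norm_num) u
  simpa using h

noncomputable def evalCLM (k : ℕ) : L1 →L[ℝ] ℝ :=
  LinearMap.mkContinuous
    { toFun := fun v => v k
      map_add' := fun v w => by simp
      map_smul' := fun c v => by simp }
    1 (fun v => by
      show ‖v k‖ ≤ 1 * ‖v‖
      simpa using lp.norm_apply_le_norm (p := 1) one_ne_zero v k)

lemma eval_hasSum (T : L1 →L[ℝ] L1) (u : L1) (k : ℕ) :
    HasSum (fun j => u j * (T (lp.single 1 j 1) k)) (T u k) := by
  have h1 : HasSum (fun j : ℕ => lp.single 1 j (u j)) u :=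
    lp.hasSum_single (by norm_num) u
  have h2 := ((evalCLM k).comp T).hasSum h1
  have h3 : ∀ j : ℕ, ((evalCLM k).comp T) (lp.single 1 j (u j))
      = u j * (T (lp.single 1 j 1) k) := by
    intro j
    have : lp.single (E := fun _ : ℕ => ℝ) 1 j (u j) = (u j) • lp.single 1 j 1 := by
      rw [← lp.single_smul]; norm_num
    simp [this, evalCLM]
    exact Or.inl rfl
  have h4 : HasSum (fun j => u j * (T (lp.single 1 j 1) k)) ((evalCLM k) (T u)) := by
    simpa [h3] using h2
  exact h4

noncomputable def aT (T : L1 →L[ℝ] L1) (j : ℕ) : ℝ := ⨆ k, |T (lp.single 1 j 1) k|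

lemma norm_single_one (j : ℕ) : ‖(lp.single (E := fun _ : ℕ => ℝ) 1 j 1 : L1)‖ = 1 := by
  have := lp.norm_single (E := fun _ : ℕ => ℝ) (p := 1) (by norm_num)
    j (1 : ℝ)
  simpa using this

lemma abs_apply_le_aT (T : L1 →L[ℝ] L1) (j k : ℕ) :
    |T (lp.single 1 j 1) k| ≤ aT T j := by
  apply le_ciSup (f := fun k => |T (lp.single 1 j 1) k|)
  refine ⟨‖T (lp.single 1 j 1)‖, ?_⟩
  rintro - ⟨k', rfl⟩
  simpa using lp.norm_apply_le_norm (p := 1) one_ne_zero (T (lp.single 1 j 1)) k'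

lemma aT_nonneg (T : L1 →L[ℝ] L1) (j : ℕ) : 0 ≤ aT T j :=
  le_trans (abs_nonneg _) (abs_apply_le_aT T j 0)

lemma aT_le (T : L1 →L[ℝ] L1) (j : ℕ) : aT T j ≤ ‖T‖ := by
  apply ciSup_le
  intro k
  have h1 : |T (lp.single 1 j 1) k| ≤ ‖T (lp.single 1 j 1)‖ := by
    simpa using lp.norm_apply_le_norm (p := 1) one_ne_zero (T (lp.single 1 j 1)) k
  calc |T (lp.single 1 j 1) k| ≤ ‖T (lp.single 1 j 1)‖ := h1
    _ ≤ ‖T‖ * ‖(lp.single (E := fun _ : ℕ => ℝ) 1 j 1 : L1)‖ := T.le_opNorm _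
    _ = ‖T‖ := by rw [norm_single_one]; ring

lemma summable_mul_aT (T : L1 →L[ℝ] L1) (u : L1) :
    Summable (fun j => |u j| * aT T j) := by
  refine Summable.of_nonneg_of_le (fun j => mul_nonneg (abs_nonneg _) (aT_nonneg T j))
    (fun j => mul_le_mul_of_nonneg_left (aT_le T j) (abs_nonneg _))
    ((hasSum_abs' u).summable.mul_right ‖T‖)

lemma sup_le_sum (T : L1 →L[ℝ] L1) (u : L1) :
    (⨆ k, |T u k|) ≤ ∑' j, |u j| * aT T j := by
  apply ciSup_le
  intro k
  have h := eval_hasSum T u k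
  calc |T u k| = |∑' j, u j * (T (lp.single 1 j 1) k)| := by rw [h.tsum_eq]
    _ ≤ ∑' j, |u j| * |T (lp.single 1 j 1) k| := by
        simpa using norm_tsum_le_tsum_norm (f := fun j => u j * (T (lp.single 1 j 1) k))
          (by
            refine Summable.of_nonneg_of_le (fun j => norm_nonneg _) ?_ (summable_mul_aT T u)
            intro j
            rw [Real.norm_eq_abs, abs_mul]
            exact mul_le_mul_of_nonneg_left (abs_apply_le_aT T j k) (abs_nonneg _))
    _ ≤ ∑' j, |u j| * aT T j := by
        refine Summable.tsum_le_tsum ?_ ?_ (summable_mul_aT T u)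
        · intro j
          exact mul_le_mul_of_nonneg_left (abs_apply_le_aT T j k) (abs_nonneg _)
        · refine Summable.of_nonneg_of_le
            (fun j => mul_nonneg (abs_nonneg _) (abs_nonneg _)) ?_ (summable_mul_aT T u)
          intro j
          exact mul_le_mul_of_nonneg_left (abs_apply_le_aT T j k) (abs_nonneg _)

lemma sup_nonneg' (T : L1 →L[ℝ] L1) (u : L1) : 0 ≤ ⨆ k, |T u k| := by
  refine le_trans (abs_nonneg (T u 0)) (le_ciSup (f := fun k => |T u k|) ?_ 0)
  refine ⟨‖T u‖, ?_⟩
  rintro - ⟨k', rfl⟩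
  simpa using lp.norm_apply_le_norm (p := 1) one_ne_zero (T u) k'

noncomputable def dsub (x : ℕ → lp (fun _ : ℕ => ℝ) 1) (A : Set ℕ) : ℝ :=
  Filter.limsup (fun n => ∑' j : A, |x n j|) Filter.atTop

def IsBddSeq (x : ℕ → lp (fun _ : ℕ => ℝ) 1) : Prop := ∃ C : ℝ, ∀ n, ‖x n‖ ≤ C

/-- `x` is nonatomic: for every `ε > 0` there is a finite partition of `ℕ`
all of whose pieces have `dsub x`-value at most `ε`. -/
def Nonatomic (x : ℕ → lp (fun _ : ℕ => ℝ) 1) : Prop :=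
  ∀ ε : ℝ, 0 < ε → ∃ (m : ℕ) (A : Fin m → Set ℕ),
    (⋃ i, A i) = Set.univ ∧ Pairwise (Function.onFun Disjoint A) ∧
    ∀ i, dsub x (A i) ≤ ε

theorem stmt_17 (T : lp (fun _ : ℕ => ℝ) 1 →L[ℝ] lp (fun _ : ℕ => ℝ) 1)
    (hz : Filter.Tendsto (fun n => ⨆ k : ℕ, |T (lp.single 1 n 1) k|)
      Filter.atTop (nhds 0)) :
    ∀ x : ℕ → lp (fun _ : ℕ => ℝ) 1, IsBddSeq x →
      (∀ j : ℕ, Filter.Tendsto (fun n => x n j) Filter.atTop (nhds 0)) →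
      IsBddSeq (fun n => T (x n)) ∧
      Filter.Tendsto (fun n => ⨆ k : ℕ, |T (x n) k|) Filter.atTop (nhds 0) := by
  intro x hx hpt
  obtain ⟨C, hC⟩ := hx
  have hC0 : 0 ≤ C := le_trans (norm_nonneg _) (hC 0)
  have haT : Tendsto (aT T) atTop (nhds 0) := hz
  constructor
  · refine ⟨‖T‖ * C, fun n => le_trans (T.le_opNorm _) ?_⟩
    exact mul_le_mul_of_nonneg_left (hC n) (norm_nonneg T)
  · have hS : Tendsto (fun n => ∑' j, |x n j| * aT T j) atTop (nhds 0) := by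
      rw [Metric.tendsto_nhds]
      intro ε hε
      set δ := ε / (2 * (C + 1)) with hδdef
      have hδ : 0 < δ := by positivity
      obtain ⟨N, hN⟩ := eventually_atTop.1 (haT.eventually (gt_mem_nhds hδ))
      have hF : Tendsto (fun n => ∑ j ∈ Finset.range N, |x n j| * aT T j)
          atTop (nhds 0) := by
        have h1 : ∀ j : ℕ, Tendsto (fun n => |x n j| * aT T j) atTop (nhds 0) := by
          intro j
          simpa using ((hpt j).abs.mul_const (aT T j))
        simpa using tendsto_finset_sum (Finset.range N) (fun j _ => h1 j)
      have hF2 : ∀ᶠ n in atTop,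
          ∑ j ∈ Finset.range N, |x n j| * aT T j < ε / 2 :=
        hF.eventually (gt_mem_nhds (by positivity))
      filter_upwards [hF2] with n hn
      have hnonneg : 0 ≤ ∑' j, |x n j| * aT T j :=
        tsum_nonneg (fun j => mul_nonneg (abs_nonneg _) (aT_nonneg T j))
      rw [Real.dist_eq, sub_zero, abs_of_nonneg hnonneg]
      rw [← Summable.sum_add_tsum_compl (s := Finset.range N) (summable_mul_aT T (x n))]
      set Sc : Set ℕ := ((Finset.range N : Finset ℕ) : Set ℕ)ᶜ with hSc
      have hsx : Summable (fun j => |x n j|) := (hasSum_abs' (x n)).summable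
      have htail : ∑' j : Sc, |x n ↑j| * aT T ↑j ≤ δ * C := by
        calc ∑' j : Sc, |x n ↑j| * aT T ↑j
            ≤ ∑' j : Sc, δ * |x n ↑j| := by
              refine Summable.tsum_le_tsum ?_ ((summable_mul_aT T (x n)).subtype _)
                ((hsx.mul_left δ).subtype _)
              rintro ⟨j, hj⟩
              have hjN : N ≤ j := by
                have : j ∉ Finset.range N := by simpa [hSc, Set.mem_compl_iff] using hj
                simpa [Finset.mem_range, not_lt] using this
              have : aT T j ≤ δ := (hN j hjN).le
              calc |x n j| * aT T j ≤ |x n j| * δ :=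
                    mul_le_mul_of_nonneg_left this (abs_nonneg _)
                _ = δ * |x n j| := by ring
          _ = δ * ∑' j : Sc, |x n ↑j| := tsum_mul_left
          _ ≤ δ * ∑' j, |x n j| := by
              refine mul_le_mul_of_nonneg_left ?_ hδ.le
              exact Summable.tsum_subtype_le (fun j => |x n j|) _ (fun j => abs_nonneg _) hsx
          _ = δ * ‖x n‖ := by rw [(hasSum_abs' (x n)).tsum_eq]
          _ ≤ δ * C := mul_le_mul_of_nonneg_left (hC n) hδ.le
      have hδC : δ * C ≤ ε / 2 := by
        have h1 : δ * (C + 1) = ε / 2 := by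
          rw [hδdef]; field_simp
        nlinarith
      linarith
    refine squeeze_zero (fun n => sup_nonneg' T (x n))
      (fun n => sup_le_sum T (x n)) hS
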